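/- arXiv:2304.14994 — 2 statements merged into one kernel-verified Lean document; each statement's English description precedes it below -/
import Mathlib

section
/- Let μ be a probability measure on X and N : X × ℝ^p → ℝ be such that for each x the map θ ↦ N(x, θ) is differentiable at θ₀, with the outer product x ↦ ∇_θN(x, θ₀) ∇_θN(x, θ₀)ᵀ μ-integrable, and define M(θ₀) = ∫_X ∇_θN(x, θ₀) ∇_θN(x, θ₀)ᵀ dμ(x). If T : ℝ → ℝ^p is a curve with T(0) = θ₀, differentiable at 0 with velocity v = T'(0), satisfying N(x, T(α)) = N(x, θ₀) for all x ∈ X and α ∈ ℝ, then M(θ₀) v = 0, i.e. v is a singular vector of M(θ₀) with singular value 0. -/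
open MeasureTheory

/-- An exact continuous parameter symmetry with velocity `v`
gives `M(θ₀) v = 0`, where `M(θ₀) = ∫ ∇_θN(x,θ₀) ∇_θN(x,θ₀)ᵀ dμ(x)` is the
Gram matrix of parameter gradients under a probability measure `μ`. -/
theorem exact_symmetry_gram_matrix_singular
    {X : Type*} [MeasurableSpace X] {p : ℕ}
    (μ : Measure X) [IsProbabilityMeasure μ]
    (N : X → (Fin p → ℝ) → ℝ)
    (θ₀ : Fin p → ℝ)
    (hN : ∀ x : X, DifferentiableAt ℝ (N x) θ₀)
    (hint : ∀ j k : Fin p, Integrable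
      (fun x => fderiv ℝ (N x) θ₀ (Pi.single j 1) *
        fderiv ℝ (N x) θ₀ (Pi.single k 1)) μ)
    (M : Matrix (Fin p) (Fin p) ℝ)
    (hM : ∀ j k : Fin p, M j k =
      ∫ x, fderiv ℝ (N x) θ₀ (Pi.single j 1) *
        fderiv ℝ (N x) θ₀ (Pi.single k 1) ∂μ)
    (T : ℝ → (Fin p → ℝ))
    (hT0 : T 0 = θ₀)
    (hT : DifferentiableAt ℝ T 0)
    (v : Fin p → ℝ) (hv : v = deriv T 0)
    (hsym : ∀ (x : X) (α : ℝ), N x (T α) = N x θ₀) :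
    M.mulVec v = 0 := by
  -- Step 1: the directional derivative of N x at θ₀ in direction v vanishes.
  have hzero : ∀ x, fderiv ℝ (N x) θ₀ v = 0 := by
    intro x
    have hcomp : HasDerivAt (fun α => N x (T α)) (fderiv ℝ (N x) θ₀ (deriv T 0)) 0 := by
      have h1 : HasFDerivAt (N x) (fderiv ℝ (N x) θ₀) (T 0) := by
        rw [hT0]; exact (hN x).hasFDerivAt
      exact h1.comp_hasDerivAt 0 hT.hasDerivAt
    have hconst : HasDerivAt (fun α => N x (T α)) 0 0 := by
      have : (fun α => N x (T α)) = fun _ => N x θ₀ := funext fun α => hsym x α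
      rw [this]; exact hasDerivAt_const 0 _
    rw [hv]
    exact hcomp.unique hconst
  -- Step 2: expand v in the standard basis inside the derivative.
  have hexp : ∀ x, ∑ k, v k * fderiv ℝ (N x) θ₀ (Pi.single k 1) = 0 := by
    intro x
    have : fderiv ℝ (N x) θ₀ v =
        ∑ k, v k * fderiv ℝ (N x) θ₀ (Pi.single k 1) := by
      have hv' : v = ∑ k, v k • (Pi.single k 1 : Fin p → ℝ) := by
        funext i
        simp [Finset.sum_apply, Pi.single_apply, mul_comm]
      conv_lhs => rw [hv']
      rw [map_sum]
      simp [smul_eq_mul]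
    rw [← this]; exact hzero x
  funext j
  simp only [Matrix.mulVec, dotProduct, Pi.zero_apply]
  have : ∀ k, M j k * v k = ∫ x, (fderiv ℝ (N x) θ₀ (Pi.single j 1) *
      fderiv ℝ (N x) θ₀ (Pi.single k 1)) * v k ∂μ := by
    intro k
    rw [hM j k, ← integral_mul_const]
  simp_rw [this]
  rw [← integral_finset_sum _ (fun k _ => (hint j k).mul_const (v k))]
  have : ∀ x, ∑ k, (fderiv ℝ (N x) θ₀ (Pi.single j 1) *
      fderiv ℝ (N x) θ₀ (Pi.single k 1)) * v k = 0 := by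
    intro x
    have := hexp x
    calc ∑ k, (fderiv ℝ (N x) θ₀ (Pi.single j 1) *
        fderiv ℝ (N x) θ₀ (Pi.single k 1)) * v k
        = fderiv ℝ (N x) θ₀ (Pi.single j 1) *
          ∑ k, v k * fderiv ℝ (N x) θ₀ (Pi.single k 1) := by
          rw [Finset.mul_sum]; congr 1; funext k; ring
      _ = 0 := by rw [this, mul_zero]
  simp_rw [this]
  exact integral_zero _ _
end

section
/- Let μ be a probability measure on X, let N : X × ℝ^p → ℝ be such that for each x the map θ ↦ N(x, θ) is differentiable at θ₀, with the outer product x ↦ ∇_θN(x, θ₀) ∇_θN(x, θ₀)ᵀ μ-integrable, and define M(θ₀) = ∫_X ∇_θN(x, θ₀) ∇_θN(x, θ₀)ᵀ dμ(x). If T : ℝ → ℝ^p is a curve with T(0) = θ₀, differentiable at 0 with velocity v = T'(0), satisfying |N(x, T(α)) − N(x, θ₀)|² ≤ ε α² for all x ∈ X and all α in a neighborhood of 0, then vᵀ M(θ₀) v ≤ ε. -/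
open MeasureTheory Matrix Filter

/-- An ε-approximate continuous parameter symmetry with velocity
`v` gives `vᵀ M(θ₀) v ≤ ε`, where `M(θ₀)` is the Gram matrix of parameter
gradients under a probability measure `μ`. -/
theorem approx_symmetry_gram_quadratic_form_le
    {X : Type*} [MeasurableSpace X] {p : ℕ}
    (μ : Measure X) [IsProbabilityMeasure μ]
    (N : X → (Fin p → ℝ) → ℝ)
    (θ₀ : Fin p → ℝ)
    (hN : ∀ x : X, DifferentiableAt ℝ (N x) θ₀)
    (hint : ∀ j k : Fin p, Integrable
      (fun x => fderiv ℝ (N x) θ₀ (Pi.single j 1) *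
        fderiv ℝ (N x) θ₀ (Pi.single k 1)) μ)
    (M : Matrix (Fin p) (Fin p) ℝ)
    (hM : ∀ j k : Fin p, M j k =
      ∫ x, fderiv ℝ (N x) θ₀ (Pi.single j 1) *
        fderiv ℝ (N x) θ₀ (Pi.single k 1) ∂μ)
    (T : ℝ → (Fin p → ℝ))
    (hT0 : T 0 = θ₀)
    (hT : DifferentiableAt ℝ T 0)
    (v : Fin p → ℝ) (hv : v = deriv T 0)
    (ε : ℝ)
    (hsym : ∀ x : X, ∀ᶠ α in nhds (0 : ℝ),
      |N x (T α) - N x θ₀| ^ 2 ≤ ε * α ^ 2) :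
    v ⬝ᵥ M.mulVec v ≤ ε := by
  set f : Fin p → X → ℝ := fun j x => fderiv ℝ (N x) θ₀ (Pi.single j 1) with hf
  -- derivative of α ↦ N x (T α)
  have hD : ∀ x, HasDerivAt (fun α => N x (T α)) (fderiv ℝ (N x) θ₀ v) 0 := by
    intro x
    have h1 : HasDerivAt T v 0 := hv ▸ hT.hasDerivAt
    have h2 : HasFDerivAt (N x) (fderiv ℝ (N x) θ₀) (T 0) := by
      rw [hT0]; exact (hN x).hasFDerivAt
    exact h2.comp_hasDerivAt 0 h1
  have hbound : ∀ x, (fderiv ℝ (N x) θ₀ v) ^ 2 ≤ ε := by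
    intro x
    have hslope := hasDerivAt_iff_tendsto_slope.1 (hD x)
    have h2 : Tendsto (fun α => (slope (fun α => N x (T α)) 0 α) ^ 2)
        (nhdsWithin 0 {(0:ℝ)}ᶜ) (nhds ((fderiv ℝ (N x) θ₀ v) ^ 2)) := hslope.pow 2
    refine le_of_tendsto h2 ?_
    have hs := (hsym x).filter_mono (nhdsWithin_le_nhds (s := {(0:ℝ)}ᶜ))
    filter_upwards [self_mem_nhdsWithin, hs] with α hα hle
    have hα0 : α ≠ 0 := hα
    have hsl : slope (fun α => N x (T α)) 0 α = (N x (T α) - N x θ₀) / α := by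
      simp [slope, hT0, div_eq_inv_mul]
    rw [hsl, div_pow, div_le_iff₀ (by positivity)]
    calc (N x (T α) - N x θ₀) ^ 2 = |N x (T α) - N x θ₀| ^ 2 := (sq_abs _).symm
      _ ≤ ε * α ^ 2 := hle
  have hDeq : ∀ x, fderiv ℝ (N x) θ₀ v = ∑ j, v j * f j x := by
    intro x
    conv_lhs => rw [pi_eq_sum_univ v]
    rw [map_sum]
    have hsingle : ∀ j : Fin p, (Pi.single j (1:ℝ) : Fin p → ℝ) =
        fun k => if j = k then 1 else 0 := by
      intro j; funext k; simp [Pi.single_apply, eq_comm]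
    simp [hf, hsingle]
  have hsq : ∀ x, (fderiv ℝ (N x) θ₀ v) ^ 2 =
      ∑ j, ∑ k, (v j * v k) * (f j x * f k x) := by
    intro x
    rw [hDeq x, sq, Finset.sum_mul_sum]
    apply Finset.sum_congr rfl; intro j _
    apply Finset.sum_congr rfl; intro k _
    ring
  have hint2 : Integrable (fun x => (fderiv ℝ (N x) θ₀ v) ^ 2) μ := by
    have : (fun x => (fderiv ℝ (N x) θ₀ v) ^ 2) =
        fun x => ∑ j, ∑ k, (v j * v k) * (f j x * f k x) := funext hsq
    rw [this]
    exact integrable_finset_sum _ fun j _ =>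
      integrable_finset_sum _ fun k _ => (hint j k).const_mul _
  have key : v ⬝ᵥ M.mulVec v = ∫ x, (fderiv ℝ (N x) θ₀ v) ^ 2 ∂μ := by
    have : v ⬝ᵥ M.mulVec v = ∑ j, ∑ k, (v j * v k) * M j k := by
      simp [dotProduct, Matrix.mulVec, Finset.mul_sum]
      apply Finset.sum_congr rfl; intro j _
      apply Finset.sum_congr rfl; intro k _
      ring
    rw [this]
    have : ∀ j k : Fin p, (v j * v k) * M j k =
        ∫ x, (v j * v k) * (f j x * f k x) ∂μ := by
      intro j k
      rw [hM j k, ← integral_const_mul]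
    simp_rw [this]
    have h1 : ∀ j ∈ Finset.univ, Integrable
        (fun x => ∑ k, (v j * v k) * (f j x * f k x)) μ :=
      fun j _ => integrable_finset_sum _ fun k _ => (hint j k).const_mul _
    have h2 : ∑ j, ∑ k, ∫ x, (v j * v k) * (f j x * f k x) ∂μ
        = ∫ x, ∑ j, ∑ k, (v j * v k) * (f j x * f k x) ∂μ := by
      rw [integral_finset_sum _ h1]
      exact Finset.sum_congr rfl fun j _ =>
        (integral_finset_sum _ fun k _ => (hint j k).const_mul _).symm
    rw [h2]
    congr 1
    funext x
    exact (hsq x).symm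
  rw [key]
  calc ∫ x, (fderiv ℝ (N x) θ₀ v) ^ 2 ∂μ ≤ ∫ _, ε ∂μ :=
        integral_mono hint2 (integrable_const ε) hbound
    _ = ε := by simp
end
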